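/- Let E be a set, D ≥ 0 an integer, d : E → ℝ_{≥0} a function, and for each e ∈ E let V_e be a real inner product space of dimension ≤ D. Let PW^r be the space of families f = (f_e) of entire functions on V_{e,ℂ}* satisfying: for all N there is C_N with |f_e(λ)| ≤ C_N (1+d(e)+|λ|)^{-N} e^{r|Re λ|}. Let PW̲^r be the space of families satisfying (a) for all N and e there is C_N(e) with |f_e(λ)| ≤ C_N(e)(1+|λ|)^{-N} e^{r|Re λ|}, and (b) for all N there is C̲_N with |f_e(λ)| ≤ C̲_N(1+d(e)+|λ|)^{-N} for all λ ∈ iV_e*. Then for every ε > 0 and r > 0, PW̲^r ⊆ PW^{r+ε}; consequently the inductive limits PW and PW̲ coincide. -/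

import Mathlib

open scoped BigOperators

/-- The hermitian norm of the real part of `λ ∈ ℂⁿ`. -/
noncomputable def reNorm {n : ℕ} (ν : EuclideanSpace ℂ (Fin n)) : ℝ :=
  Real.sqrt (∑ j, (ν j).re ^ 2)

/-- The family `f = (f_e)` belongs to `PW^r`: for all `N` there is a uniform `C_N` with
`|f_e(λ)| ≤ C_N (1 + d(e) + |λ|)^{-N} e^{r |Re λ|}` for all `e` and `λ`. -/
def MemPW (E : Type*) (d : E → ℝ) (dim : E → ℕ) (r : ℝ)
    (f : ∀ e : E, EuclideanSpace ℂ (Fin (dim e)) → ℂ) : Prop :=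
  ∀ N : ℕ, ∃ C : ℝ, ∀ (e : E) (ν : EuclideanSpace ℂ (Fin (dim e))),
    (1 + d e + ‖ν‖) ^ N * ‖f e ν‖ ≤ C * Real.exp (r * reNorm ν)

/-- The family `f = (f_e)` belongs to `PW̲^r`: (a) for all `N` and `e` there is `C_N(e)` with
`|f_e(λ)| ≤ C_N(e) (1+|λ|)^{-N} e^{r |Re λ|}`, and (b) for all `N` there is a uniform `C̲_N`
with `|f_e(λ)| ≤ C̲_N (1 + d(e) + |λ|)^{-N}` for all `e` and `λ ∈ iV_e*`. -/
def MemPWu (E : Type*) (d : E → ℝ) (dim : E → ℕ) (r : ℝ)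
    (f : ∀ e : E, EuclideanSpace ℂ (Fin (dim e)) → ℂ) : Prop :=
  (∀ (e : E) (N : ℕ), ∃ C : ℝ, ∀ ν : EuclideanSpace ℂ (Fin (dim e)),
      (1 + ‖ν‖) ^ N * ‖f e ν‖ ≤ C * Real.exp (r * reNorm ν)) ∧
    ∀ N : ℕ, ∃ C : ℝ, ∀ (e : E) (ν : EuclideanSpace ℂ (Fin (dim e))),
      (∀ j, (ν j).re = 0) → (1 + d e + ‖ν‖) ^ N * ‖f e ν‖ ≤ C

open Complex Filter Topology

lemma tendsto_aux (N : ℕ) (K c : ℝ) (hc : 0 < c) :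
    Tendsto (fun x : ℝ => (K + x) ^ N * Real.exp (-(c * x))) atTop (nhds 0) := by
  have hcomp : Tendsto (fun x : ℝ => c * (K + x)) atTop atTop := by
    have := tendsto_atTop_add_const_left atTop (c * K) (tendsto_id.const_mul_atTop hc)
    refine this.congr fun x => by simp; ring
  have h1 := (Real.tendsto_pow_mul_exp_neg_atTop_nhds_zero N).comp hcomp
  have h2 := h1.const_mul ((c ^ N)⁻¹ * Real.exp (c * K))
  rw [mul_zero] at h2
  refine h2.congr fun x => ?_
  simp only [Function.comp_apply]
  calc (c ^ N)⁻¹ * Real.exp (c * K) * ((c * (K + x)) ^ N * Real.exp (-(c * (K + x))))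
      = ((c ^ N)⁻¹ * (c ^ N * (K + x) ^ N)) *
        (Real.exp (c * K) * Real.exp (-(c * (K + x)))) := by rw [mul_pow]; ring
    _ = (K + x) ^ N * Real.exp (-(c * x)) := by
        rw [inv_mul_cancel_left₀ (pow_ne_zero _ hc.ne'), ← Real.exp_add]
        congr 1; ring

lemma norm_h (g : ℂ → ℂ) (r' : ℝ) (w : ℂ) :
    ‖g w * Complex.exp (-(r' * w))‖ = ‖g w‖ * Real.exp (-(r' * w.re)) := by
  rw [norm_mul]
  congr 1
  rw [Complex.norm_exp]
  congr 1
  simp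

lemma PL_key (g : ℂ → ℂ) (hg : Differentiable ℂ g) (r' A B M : ℝ) (hr' : 0 < r')
    (hA : ∀ z : ℂ, ‖g z‖ ≤ A * Real.exp (B * ‖z‖))
    (hre : Tendsto (fun x : ℝ => ‖g x‖ * Real.exp (-(r' * x))) atTop (nhds 0))
    (him : ∀ s : ℝ, ‖g (s * I)‖ ≤ M)
    {z : ℂ} (hz : 0 ≤ z.re) : ‖g z‖ ≤ M * Real.exp (r' * z.re) := by
  have hA0 : 0 ≤ A := by
    have := (norm_nonneg (g 0)).trans (hA 0)
    nlinarith [Real.exp_pos (B * ‖(0:ℂ)‖)]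
  set h : ℂ → ℂ := fun w => g w * Complex.exp (-(r' * w)) with hh
  have hhd : Differentiable ℂ h :=
    hg.mul (((differentiable_const (r':ℂ)).mul differentiable_id).neg.cexp)
  have key : ‖h z‖ ≤ M := by
    refine PhragmenLindelof.right_half_plane_of_tendsto_zero_on_real hhd.diffContOnCl
      ⟨1, one_lt_two, B + r', ?_⟩ ?_ (fun s => ?_) hz
    · refine Asymptotics.IsBigO.mono ?_ inf_le_left
      refine (Asymptotics.isBigO_of_le' (c := A) _ fun w => ?_)
      have hb : ‖h w‖ ≤ A * Real.exp ((B + r') * ‖w‖) := by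
        rw [hh]; simp only; rw [norm_h]
        have h2 : -(r' * w.re) ≤ r' * ‖w‖ := by
          nlinarith [Complex.abs_re_le_norm w, neg_abs_le w.re, hr'.le, norm_nonneg w]
        calc ‖g w‖ * Real.exp (-(r' * w.re))
            ≤ (A * Real.exp (B * ‖w‖)) * Real.exp (r' * ‖w‖) :=
              mul_le_mul (hA w) (Real.exp_le_exp.2 h2) (Real.exp_nonneg _) (by positivity)
          _ = A * Real.exp ((B + r') * ‖w‖) := by
              rw [mul_assoc, ← Real.exp_add]; ring_nf
      calc ‖h w‖ ≤ A * Real.exp ((B + r') * ‖w‖) := hb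
        _ ≤ A * ‖Real.exp ((B + r') * ‖w‖ ^ (1:ℝ))‖ := by
            rw [Real.rpow_one, Real.norm_eq_abs, abs_of_pos (Real.exp_pos _)]
    · rw [tendsto_zero_iff_norm_tendsto_zero]
      refine squeeze_zero (fun x => norm_nonneg _) (fun x => ?_) hre
      rw [hh]; simp only; rw [norm_h]; simp
    · rw [hh]; simp only; rw [norm_h]
      have h0 : ((s : ℂ) * I).re = 0 := by simp
      rw [h0]
      norm_num
      exact him s
  rw [hh] at key; simp only at key; rw [norm_h] at key
  have hepos : (0:ℝ) < Real.exp (r' * z.re) := Real.exp_pos _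
  have := mul_le_mul_of_nonneg_right key hepos.le
  rwa [mul_assoc, ← Real.exp_add, neg_add_cancel, Real.exp_zero, mul_one] at this

lemma le_of_sq_le_sq9 {A B : ℝ} (hA : 0 ≤ A) (hB : 0 ≤ B) (h : A ^ 2 ≤ B ^ 2) : A ≤ B := by
  have := Real.sqrt_le_sqrt h
  rwa [Real.sqrt_sq hA, Real.sqrt_sq hB] at this


set_option maxHeartbeats 2000000 in
lemma mainB {n : ℕ} (F : EuclideanSpace ℂ (Fin n) → ℂ) (hF : Differentiable ℂ F)
    (d r ε : ℝ) (hd : 0 ≤ d) (hr : 0 < r) (hε : 0 < ε) (N : ℕ) (Ca Cb : ℝ)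
    (ha : ∀ ν, ‖F ν‖ ≤ Ca * Real.exp (r * reNorm ν))
    (hb : ∀ ν : EuclideanSpace ℂ (Fin n), (∀ j, (ν j).re = 0) →
      (1 + d + ‖ν‖) ^ N * ‖F ν‖ ≤ Cb)
    (ν : EuclideanSpace ℂ (Fin n)) :
    (1 + d + ‖ν‖) ^ N * ‖F ν‖ ≤ 4 ^ N * Cb * Real.exp ((r + ε) * reNorm ν) := by
  have hCb : 0 ≤ Cb := le_trans (by positivity) (hb 0 (by intro j; simp))
  have hCa : 0 ≤ Ca := by
    have := (norm_nonneg (F 0)).trans (ha 0)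
    nlinarith [Real.exp_pos (r * reNorm (0 : EuclideanSpace ℂ (Fin n)))]
  set t := reNorm ν with ht
  have ht0 : 0 ≤ t := Real.sqrt_nonneg _
  rcases eq_or_lt_of_le ht0 with h0 | htpos
  · -- t = 0 : all real parts vanish
    have hsum : (∑ j, (ν j).re ^ 2) = 0 := by
      by_contra h
      have h1 : 0 < ∑ j, (ν j).re ^ 2 :=
        lt_of_le_of_ne (Finset.sum_nonneg fun j _ => sq_nonneg _) (Ne.symm h)
      have h2 : 0 < t := by rw [ht]; unfold reNorm; exact Real.sqrt_pos.2 h1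
      linarith
    have hzero : ∀ j, (ν j).re = 0 := by
      intro j
      have := (Finset.sum_eq_zero_iff_of_nonneg (fun j _ => sq_nonneg ((ν j).re))).1 hsum j
        (Finset.mem_univ j)
      exact pow_eq_zero_iff (n := 2) (by norm_num) |>.1 this
    have h1 := hb ν hzero
    have h4 : (1:ℝ) ≤ 4 ^ N := one_le_pow₀ (by norm_num)
    have hexp1 : Real.exp ((r + ε) * t) = 1 := by rw [← h0, mul_zero, Real.exp_zero]
    calc (1 + d + ‖ν‖) ^ N * ‖F ν‖ ≤ Cb := h1
      _ ≤ 4 ^ N * Cb * Real.exp ((r + ε) * t) := by rw [hexp1]; nlinarith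
  · -- main case t > 0
    set x : Fin n → ℝ := fun j => (ν j).re with hx
    set y : Fin n → ℝ := fun j => (ν j).im with hy
    have hX : ∑ j, x j ^ 2 = t ^ 2 := by
      rw [ht]; unfold reNorm
      rw [Real.sq_sqrt (Finset.sum_nonneg fun j _ => sq_nonneg _)]
    set u : Fin n → ℝ := fun j => x j / t with hu'
    have hu : ∑ j, u j ^ 2 = 1 := by
      simp only [hu', div_pow]
      rw [← Finset.sum_div, hX, div_self (by positivity)]
    set α : ℝ := ∑ j, u j * y j with hα
    set Y : ℝ := ∑ j, y j ^ 2 with hY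
    have hY0 : 0 ≤ Y := Finset.sum_nonneg fun j _ => sq_nonneg _
    have hCS : α ^ 2 ≤ Y := by
      have h := Finset.sum_mul_sq_le_sq_mul_sq Finset.univ u y
      rw [hu, one_mul] at h
      exact h
    set β : ℝ := Real.sqrt (Y - α ^ 2) with hβ
    have hβ0 : 0 ≤ β := Real.sqrt_nonneg _
    have hβ2 : β ^ 2 = Y - α ^ 2 := Real.sq_sqrt (by linarith)
    set a : ℝ := 1 + d + β with ha'
    have ha0 : 1 ≤ a := by simp only [ha']; linarith
    set V : EuclideanSpace ℂ (Fin n) := (WithLp.equiv 2 (Fin n → ℂ)).symm (fun j => (u j : ℂ)) with hV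
    set W : EuclideanSpace ℂ (Fin n) := (WithLp.equiv 2 (Fin n → ℂ)).symm (fun j => (y j : ℂ) * I) with hW
    have happ : ∀ (z : ℂ) (j : Fin n), (z • V + W) j = z * (u j : ℂ) + (y j : ℂ) * I := by
      intro z j; simp [hV, hW]
    have hphire : ∀ (z : ℂ) (j : Fin n), ((z • V + W) j).re = z.re * u j := by
      intro z j; rw [happ]; simp
    have hphiim : ∀ (z : ℂ) (j : Fin n), ((z • V + W) j).im = z.im * u j + y j := by
      intro z j; rw [happ]; simp
    have hrenorm : ∀ z : ℂ, reNorm (z • V + W) = |z.re| := by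
      intro z
      unfold reNorm
      have : ∀ j ∈ Finset.univ, ((z • V + W) j).re ^ 2 = z.re ^ 2 * u j ^ 2 := by
        intro j _; rw [hphire]; ring
      rw [Finset.sum_congr rfl this, ← Finset.mul_sum, hu, mul_one, Real.sqrt_sq_eq_abs]
    set c : ℂ := (a : ℂ) + (α : ℂ) * I with hc
    set P : ℂ → ℂ := fun z => (c + z) ^ N with hP
    set g : ℂ → ℂ := fun z => F (z • V + W) * P z with hg
    have hgdiff : Differentiable ℂ g := by
      refine Differentiable.mul (hF.comp ?_) ?_
      · exact (differentiable_id.smul_const V).add_const W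
      · exact ((differentiable_const c).add differentiable_id).pow N
    have habsg : ∀ z : ℂ, ‖g z‖ =
        ‖F (z • V + W)‖ * ‖c + z‖ ^ N := by
      intro z; simp [hg, hP, map_mul, map_pow]
    have habsc : ∀ z : ℂ, ‖c + z‖ ≤ a + |α| + ‖z‖ := by
      intro z
      calc ‖c + z‖ ≤ ‖c‖ + ‖z‖ := norm_add_le _ _
        _ ≤ a + |α| + ‖z‖ := by
            have : ‖c‖ ≤ ‖(a:ℂ)‖ + ‖(α:ℂ)*I‖ :=
              norm_add_le _ _
            simp only [norm_mul, Complex.norm_real, Real.norm_eq_abs, Complex.norm_I, mul_one] at this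
            rw [_root_.abs_of_nonneg (by linarith : (0:ℝ) ≤ a)] at this
            linarith
    -- growth bound
    have hA : ∀ z : ℂ, ‖g z‖ ≤
        (Ca * (a + |α| + 1) ^ N) * Real.exp ((r + N) * ‖z‖) := by
      intro z
      have hF1 : ‖F (z • V + W)‖ ≤ Ca * Real.exp (r * ‖z‖) := by
        refine (ha _).trans ?_
        rw [hrenorm]
        exact mul_le_mul_of_nonneg_left (Real.exp_le_exp.2
          (mul_le_mul_of_nonneg_left (Complex.abs_re_le_norm z) hr.le)) hCa
      have hP1 : ‖c + z‖ ^ N ≤ (a + |α| + 1) ^ N * Real.exp (N * ‖z‖) := by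
        have h1 : ‖c + z‖ ≤ (a + |α| + 1) * Real.exp (‖z‖) := by
          have h2 := Real.add_one_le_exp (‖z‖)
          have h3 := habsc z
          nlinarith [norm_nonneg z, abs_nonneg α]
        calc ‖c + z‖ ^ N ≤ ((a + |α| + 1) * Real.exp (‖z‖)) ^ N :=
              pow_le_pow_left₀ (norm_nonneg _) h1 N
          _ = (a + |α| + 1) ^ N * Real.exp (N * ‖z‖) := by
              rw [mul_pow, ← Real.exp_nat_mul]
      calc ‖g z‖
          = ‖F (z • V + W)‖ * ‖c + z‖ ^ N := habsg z
        _ ≤ (Ca * Real.exp (r * ‖z‖)) *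
            ((a + |α| + 1) ^ N * Real.exp (N * ‖z‖)) := by
            exact mul_le_mul hF1 hP1 (by positivity) (by positivity)
        _ = (Ca * (a + |α| + 1) ^ N) * Real.exp ((r + N) * ‖z‖) := by
            rw [show (r + (N:ℝ)) * ‖z‖ = r * ‖z‖ + N * ‖z‖ by ring,
              Real.exp_add]; ring
    -- decay on the real axis
    have hdecay : Tendsto (fun s : ℝ => ‖g s‖ * Real.exp (-((r + ε) * s)))
        atTop (nhds 0) := by
      have hlim := (tendsto_aux N (a + |α|) ε hε).const_mul Ca
      rw [mul_zero] at hlim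
      refine squeeze_zero' (Eventually.of_forall fun s => by positivity) ?_ hlim
      filter_upwards [eventually_ge_atTop (0:ℝ)] with s hs
      have h1 : ‖F ((s:ℂ) • V + W)‖ ≤ Ca * Real.exp (r * s) := by
        refine (ha _).trans ?_
        rw [hrenorm]
        simp only [Complex.ofReal_re]
        rw [_root_.abs_of_nonneg hs]
      have h2 : ‖c + (s:ℂ)‖ ^ N ≤ (a + |α| + s) ^ N := by
        refine pow_le_pow_left₀ (norm_nonneg _) ?_ N
        refine (habsc _).trans ?_
        rw [Complex.norm_real, Real.norm_eq_abs, _root_.abs_of_nonneg hs]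
      calc ‖g s‖ * Real.exp (-((r + ε) * s))
          ≤ (Ca * Real.exp (r * s) * (a + |α| + s) ^ N) * Real.exp (-((r + ε) * s)) := by
            rw [habsg]
            refine mul_le_mul_of_nonneg_right ?_ (Real.exp_nonneg _)
            calc ‖F ((s:ℂ) • V + W)‖ * ‖c + (s:ℂ)‖ ^ N
                ≤ (Ca * Real.exp (r * s)) * (a + |α| + s) ^ N :=
                  mul_le_mul h1 h2 (by positivity) (by positivity)
              _ = Ca * Real.exp (r * s) * (a + |α| + s) ^ N := by ring
        _ = Ca * ((a + |α| + s) ^ N * Real.exp (-(ε * s))) := by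
            have hee : Real.exp (r * s) * Real.exp (-((r + ε) * s)) = Real.exp (-(ε * s)) := by
              rw [← Real.exp_add]; congr 1; ring
            rw [← hee]; ring
    clear_value V W
    -- bound on the imaginary axis
    have him : ∀ s : ℝ, ‖g ((s:ℂ) * I)‖ ≤ 2 ^ N * Cb := by
      intro s
      set μ : EuclideanSpace ℂ (Fin n) := ((s:ℂ) * I) • V + W with hμ
      have hμre : ∀ j, (μ j).re = 0 := by
        intro j; rw [hμ, hphire]; simp
      have hμim : ∀ j, (μ j).im = s * u j + y j := by
        intro j; rw [hμ, hphiim]; simp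
      have hsum : ∑ j, ‖μ j‖ ^ 2 = (s + α) ^ 2 + β ^ 2 := by
        have hterm : ∀ j ∈ Finset.univ, ‖μ j‖ ^ 2 =
            s ^ 2 * u j ^ 2 + (2 * s) * (u j * y j) + y j ^ 2 := by
          intro j _
          rw [Complex.sq_norm, Complex.normSq_apply, hμre, hμim]
          ring
        rw [Finset.sum_congr rfl hterm, Finset.sum_add_distrib, Finset.sum_add_distrib,
          ← Finset.mul_sum, ← Finset.mul_sum, hu, ← hα, ← hY]
        rw [hβ2]; ring
      have hnormμ : ‖μ‖ ^ 2 = (s + α) ^ 2 + β ^ 2 := by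
        rw [EuclideanSpace.norm_eq]
        rw [Real.sq_sqrt (Finset.sum_nonneg fun j _ => sq_nonneg _)]
        exact hsum
      have hgμ : ‖g ((s:ℂ) * I)‖ =
          ‖F μ‖ * ‖c + (s:ℂ) * I‖ ^ N := by rw [habsg, hμ]
      clear_value μ
      set q : ℝ := ‖μ‖ with hq
      have hq0 : 0 ≤ q := norm_nonneg _
      have hqβ : β ≤ q :=
        le_of_sq_le_sq9 hβ0 hq0 (by nlinarith [hnormμ, sq_nonneg (s + α)])
      have hqs : |s + α| ≤ q :=
        le_of_sq_le_sq9 (abs_nonneg _) hq0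
          (by rw [_root_.sq_abs]; nlinarith [hnormμ, sq_nonneg β])
      have habs2 : ‖c + (s:ℂ) * I‖ ^ 2 = a ^ 2 + (s + α) ^ 2 := by
        rw [Complex.sq_norm, Complex.normSq_apply, hc]
        simp
        ring
      have habs_cs : ‖c + (s:ℂ) * I‖ ≤ 2 * (1 + d + q) := by
        have h5 : (s + α) ^ 2 ≤ q ^ 2 := by
          have := mul_self_le_mul_self (abs_nonneg (s + α)) hqs
          nlinarith [_root_.sq_abs (s + α)]
        have h6 : a ≤ 1 + d + q := by rw [ha']; linarith
        refine le_of_sq_le_sq9 (norm_nonneg _)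
          (by positivity) ?_
        rw [habs2]
        nlinarith [h5, h6, hq0, hd, ha0, hβ0]
      have hbμ := hb μ hμre
      rw [← hq] at hbμ
      calc ‖g ((s:ℂ) * I)‖
          = ‖F μ‖ * ‖c + (s:ℂ) * I‖ ^ N := hgμ
        _ ≤ ‖F μ‖ * (2 * (1 + d + q)) ^ N :=
            mul_le_mul_of_nonneg_left
              (pow_le_pow_left₀ (norm_nonneg _) habs_cs N) (norm_nonneg _)
        _ = 2 ^ N * ((1 + d + q) ^ N * ‖F μ‖) := by rw [mul_pow]; ring
        _ ≤ 2 ^ N * Cb := mul_le_mul_of_nonneg_left hbμ (by positivity)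
    -- apply Phragmen-Lindelof
    have htre : (0:ℝ) ≤ ((t:ℂ)).re := by simpa using ht0
    have hPL := PL_key g hgdiff (r + ε) (Ca * (a + |α| + 1) ^ N) (r + N) (2 ^ N * Cb)
      (by linarith) hA hdecay him htre
    have htre' : ((t:ℂ)).re = t := by simp
    rw [htre'] at hPL
    -- identify g t with F ν
    have hφt : (t:ℂ) • V + W = ν := by
      ext j
      rw [happ]
      have h1 : (t:ℂ) * ((u j : ℝ) : ℂ) = ((x j : ℝ) : ℂ) := by
        rw [← Complex.ofReal_mul]
        congr 1
        rw [hu']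
        field_simp
      rw [h1]
      exact Complex.re_add_im (ν j)
    have hgt : ‖g (t:ℂ)‖ = ‖F ν‖ * ‖c + (t:ℂ)‖ ^ N := by
      rw [habsg, hφt]
    have habsPt2 : ‖c + (t:ℂ)‖ ^ 2 = (a + t) ^ 2 + α ^ 2 := by
      rw [Complex.sq_norm, Complex.normSq_apply, hc]
      simp
      ring
    have hnormν : ‖ν‖ ^ 2 = t ^ 2 + α ^ 2 + β ^ 2 := by
      rw [EuclideanSpace.norm_eq]
      rw [Real.sq_sqrt (Finset.sum_nonneg fun j _ => sq_nonneg _)]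
      have hterm : ∀ j ∈ Finset.univ, ‖ν j‖ ^ 2 = x j ^ 2 + y j ^ 2 := by
        intro j _
        rw [Complex.sq_norm, Complex.normSq_apply]
        simp [hx, hy]
        ring
      rw [Finset.sum_congr rfl hterm, Finset.sum_add_distrib, hX, ← hY, hβ2]
      ring
    have h6 : ‖ν‖ ≤ t + |α| + β := by
      refine le_of_sq_le_sq9 (norm_nonneg _) (by positivity) ?_
      rw [hnormν]
      nlinarith [_root_.sq_abs α, abs_nonneg α, ht0, hβ0]
    have hkey2 : 1 + d + ‖ν‖ ≤ 2 * ‖c + (t:ℂ)‖ := by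
      have h7 : 1 + d + ‖ν‖ ≤ a + t + |α| := by rw [ha']; linarith
      have h8 : a + t + |α| ≤ 2 * ‖c + (t:ℂ)‖ := by
        refine le_of_sq_le_sq9 (by positivity) (by positivity) ?_
        rw [mul_pow, habsPt2]
        nlinarith [_root_.sq_abs α, sq_nonneg (a + t - |α|), abs_nonneg α, ht0, ha0]
      linarith
    calc (1 + d + ‖ν‖) ^ N * ‖F ν‖
        ≤ (2 * ‖c + (t:ℂ)‖) ^ N * ‖F ν‖ :=
          mul_le_mul_of_nonneg_right
            (pow_le_pow_left₀ (by positivity) hkey2 N) (norm_nonneg _)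
      _ = 2 ^ N * (‖F ν‖ * ‖c + (t:ℂ)‖ ^ N) := by rw [mul_pow]; ring
      _ = 2 ^ N * ‖g (t:ℂ)‖ := by rw [hgt]
      _ ≤ 2 ^ N * (2 ^ N * Cb * Real.exp ((r + ε) * t)) :=
          mul_le_mul_of_nonneg_left hPL (by positivity)
      _ = 4 ^ N * Cb * Real.exp ((r + ε) * t) := by
          rw [show (4:ℝ) ^ N = 2 ^ N * 2 ^ N by rw [← mul_pow]; norm_num]
          ring


/-- Comparison of Paley-Wiener spaces: for a family `(f_e)` of entire functions on spaces of
dimension bounded by `D`, one has `PW̲^r ⊆ PW^{r+ε}` for every `r, ε > 0`; consequently the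
inductive limits `PW = ⋃_r PW^r` and `PW̲ = ⋃_r PW̲^r` coincide. -/
theorem paleyWiener_spaces_eq
    (E : Type*) (D : ℕ) (d : E → ℝ) (hd : ∀ e, 0 ≤ d e)
    (dim : E → ℕ) (hdim : ∀ e, dim e ≤ D)
    (f : ∀ e : E, EuclideanSpace ℂ (Fin (dim e)) → ℂ)
    (hent : ∀ e, Differentiable ℂ (f e)) :
    (∀ r > (0 : ℝ), ∀ ε > (0 : ℝ), MemPWu E d dim r f → MemPW E d dim (r + ε) f) ∧
      ((∃ r > (0 : ℝ), MemPWu E d dim r f) ↔ (∃ r > (0 : ℝ), MemPW E d dim r f)) := by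
  have part1 : ∀ r > (0 : ℝ), ∀ ε > (0 : ℝ), MemPWu E d dim r f → MemPW E d dim (r + ε) f := by
    intro r hr ε hε h N
    obtain ⟨ha, hb⟩ := h
    obtain ⟨Cb, hCb⟩ := hb N
    refine ⟨4 ^ N * Cb, fun e ν => ?_⟩
    obtain ⟨Ca, hCa⟩ := ha e 0
    exact mainB (f e) (hent e) (d e) r ε (hd e) hr hε N Ca Cb
      (fun μ => by simpa using hCa μ) (fun μ hμ => hCb e μ hμ) ν
  refine ⟨part1, ?_, ?_⟩
  · rintro ⟨r, hr, h⟩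
    exact ⟨r + r, by linarith, part1 r hr r hr h⟩
  · rintro ⟨r, hr, h⟩
    refine ⟨r, hr, ?_, ?_⟩
    · intro e N
      obtain ⟨C, hC⟩ := h N
      refine ⟨C, fun ν => ?_⟩
      refine le_trans ?_ (hC e ν)
      have h1 : (1 + ‖ν‖) ^ N ≤ (1 + d e + ‖ν‖) ^ N :=
        pow_le_pow_left₀ (by positivity) (by linarith [hd e]) N
      exact mul_le_mul_of_nonneg_right h1 (norm_nonneg _)
    · intro N
      obtain ⟨C, hC⟩ := h N
      refine ⟨C, fun e ν hre0 => ?_⟩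
      have h0 : reNorm ν = 0 := by
        unfold reNorm
        rw [Finset.sum_eq_zero fun j _ => by rw [hre0 j]; norm_num, Real.sqrt_zero]
      have := hC e ν
      rwa [h0, mul_zero, Real.exp_zero, mul_one] at this
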